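/- arXiv:1507.02370 — 3 statements merged into one kernel-verified Lean document; each statement's English description precedes it below -/
import Mathlib

section
/- Let G = {1, σ} be a group of order 2 and A a G-module that is a finitely generated abelian group. Then #H¹(G, A) = 2^{r(A) - 2r₊(A)} · (A^G : NA), where NA = {a + σa : a ∈ A}, r(A) = rank(A), and r₊(A) = rank(A^G). -/
variable (G : Type*) [Group G] [Fintype G] (A : Type*) [AddCommGroup A] [DistribMulAction G A]

/-- The norm map `a ↦ ∑_{τ ∈ G} τ • a`. -/
noncomputable def normMap : A →+ A := ∑ τ : G, DistribMulAction.toAddMonoidHom A τ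

/-- The map `a ↦ a - σ • a`. -/
def oneSubMap (σ : G) : A →+ A := AddMonoidHom.id A - DistribMulAction.toAddMonoidHom A σ

/-- The subgroup of `G`-fixed points `A^G`. -/
def fixedSub : AddSubgroup A where
  carrier := {a | ∀ τ : G, τ • a = a}
  zero_mem' := fun τ => smul_zero τ
  add_mem' := fun ha hb τ => by rw [smul_add, ha τ, hb τ]
  neg_mem' := fun ha τ => by rw [smul_neg, ha τ]

/-- `#H¹(G,A)` for `G` cyclic with generator `σ`, computed as `#(ker N_G / (1-σ)A)`. -/
noncomputable def H1card (σ : G) : ℕ :=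
  Nat.card ((normMap G A).ker ⧸ ((oneSubMap G A σ).range.addSubgroupOf (normMap G A).ker))

/-- `#Ĥ⁰(G,A) = (A^G : N_G A)`. -/
noncomputable def H0card : ℕ :=
  Nat.card (fixedSub G A ⧸ ((normMap G A).range.addSubgroupOf (fixedSub G A)))

/-- The Herbrand quotient `h(G,A) = #Ĥ⁰(G,A) / #H¹(G,A)`. -/
noncomputable def herbrand (σ : G) : ℚ := (H0card G A : ℚ) / (H1card G A σ : ℚ)


section HerbrandAux

/-- doubling hom -/
private def two (B : Type*) [AddCommGroup B] : B →+ B := zsmulAddGroupHom 2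

lemma two_apply {B : Type*} [AddCommGroup B] (b : B) : two B b = b + b := two_zsmul b

lemma mem_two_range {B : Type*} [AddCommGroup B] (b : B) : b ∈ (two B).range ↔ ∃ a, a + a = b := by
  simp [two, AddMonoidHom.mem_range, zsmulAddGroupHom_apply, two_zsmul]

lemma mem_two_ker {B : Type*} [AddCommGroup B] (b : B) : b ∈ (two B).ker ↔ b + b = 0 := by
  simp [two, AddMonoidHom.mem_ker, zsmulAddGroupHom_apply, two_zsmul]

/-- L0: subgroups of f.g. abelian groups are f.g. -/
lemma addSubgroup_fg {B : Type*} [AddCommGroup B] [AddGroup.FG B] (S : AddSubgroup B) :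
    AddGroup.FG S := by
  have : Module.Finite ℤ B := Module.Finite.iff_addGroup_fg.mpr ‹_›
  have h : IsNoetherian ℤ B := inferInstance
  have hfg : (AddSubgroup.toIntSubmodule S).FG := (isNoetherian_def.mp h) _
  have : Module.Finite ℤ (AddSubgroup.toIntSubmodule S) := Module.Finite.iff_fg.mpr hfg
  exact Module.Finite.iff_addGroup_fg.mp this

/-- L1 -/
lemma finrank_eq_zero_of_finite {M : Type*} [AddCommGroup M] [Finite M] :
    Module.finrank ℤ M = 0 := by
  have h : Module.rank ℤ M = 0 := by
    rw [rank_eq_zero_iff]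
    intro x
    have hx : IsOfFinAddOrder x := isOfFinAddOrder_of_finite x
    refine ⟨addOrderOf x, ?_, ?_⟩
    · exact_mod_cast (addOrderOf_pos x).ne'
    · exact_mod_cast addOrderOf_nsmul_eq_zero x
  simp [Module.finrank, h]

/-- L3a -/
lemma index_range_eq_card_ker_of_finite {B : Type*} [AddCommGroup B] [Finite B] (f : B →+ B) :
    f.range.index = Nat.card f.ker := by
  have h1 := AddSubgroup.card_mul_index f.range
  have h2 := AddSubgroup.card_mul_index f.ker
  rw [AddSubgroup.index_ker] at h2
  have hr : Nat.card f.range ≠ 0 := Nat.card_ne_zero.mpr ⟨⟨0, AddSubgroup.zero_mem _⟩, inferInstance⟩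
  apply Nat.eq_of_mul_eq_mul_left (Nat.pos_of_ne_zero hr)
  rw [h1, ← h2]; ring

/-- transfer of 2-quotient index along AddEquiv -/
lemma index_two_range_congr {B C : Type*} [AddCommGroup B] [AddCommGroup C] (e : B ≃+ C) :
    (two B).range.index = (two C).range.index := by
  have hmap : ((two B).range.map (e : B →+ C)) = (two C).range := by
    ext c
    simp only [AddSubgroup.mem_map, mem_two_range]
    constructor
    · rintro ⟨b, ⟨a, rfl⟩, rfl⟩; exact ⟨e a, by rw [← map_add]; rfl⟩
    · rintro ⟨a, rfl⟩; exact ⟨e.symm a + e.symm a, ⟨e.symm a, rfl⟩, by rw [map_add]; simp⟩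
  rw [AddSubgroup.index_eq_card, AddSubgroup.index_eq_card]
  exact Nat.card_congr (QuotientAddGroup.congr _ _ e hmap).toEquiv

lemma card_two_ker_congr {B C : Type*} [AddCommGroup B] [AddCommGroup C] (e : B ≃+ C) :
    Nat.card (two B).ker = Nat.card (two C).ker := by
  apply Nat.card_congr
  refine ⟨fun x => ⟨e x.1, ?_⟩, fun y => ⟨e.symm y.1, ?_⟩, fun x => by simp, fun y => by simp⟩
  · have := (mem_two_ker (B := B) x.1).mp x.2
    rw [mem_two_ker, ← map_add, this, map_zero]
  · have := (mem_two_ker (B := C) y.1).mp y.2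
    rw [mem_two_ker, ← map_add, this, map_zero]

/-- L3b: free case -/
lemma index_two_range_of_free {B : Type*} [AddCommGroup B] [Module ℤ B] [Module.Free ℤ B]
    [Module.Finite ℤ B] : (two B).range.index = 2 ^ Module.finrank ℤ B := by
  classical
  set ι := Module.Free.ChooseBasisIndex ℤ B
  have e : B ≃+ (ι → ℤ) :=
    ((Module.Free.chooseBasis ℤ B).repr.trans (Finsupp.linearEquivFunOnFinite ℤ ℤ ι)).toAddEquiv
  rw [index_two_range_congr e, Module.finrank_eq_card_chooseBasisIndex ℤ B]
  -- now compute for ι → ℤ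
  set g : (ι → ℤ) →+ (ι → ZMod 2) :=
    { toFun := fun f i => (f i : ZMod 2)
      map_zero' := by ext i; simp
      map_add' := by intro f h; ext i; push_cast; simp }
  have hsurj : Function.Surjective g := by
    intro s
    refine ⟨fun i => ((s i).val : ℤ), ?_⟩
    ext i
    simp [g, ZMod.natCast_val, ZMod.cast_id]
  have hker : g.ker = (two (ι → ℤ)).range := by
    ext f
    simp only [AddMonoidHom.mem_ker, mem_two_range]
    constructor
    · intro hf
      have hdvd : ∀ i, (2:ℤ) ∣ f i := by
        intro i
        have : ((f i : ZMod 2)) = 0 := congrFun hf i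
        exact_mod_cast (ZMod.intCast_zmod_eq_zero_iff_dvd (f i) 2).mp this
      refine ⟨fun i => f i / 2, ?_⟩
      ext i
      have h2 := hdvd i
      simp only [Pi.add_apply]
      omega
    · rintro ⟨a, rfl⟩
      ext i
      show ((a i + a i : ℤ) : ZMod 2) = 0
      push_cast
      exact CharTwo.add_self_eq_zero _
  rw [AddSubgroup.index_eq_card, ← hker]
  rw [Nat.card_congr (QuotientAddGroup.quotientKerEquivOfSurjective g hsurj).toEquiv]
  simp [Nat.card_pi]
  exact Fintype.card_congr (Equiv.refl _)

/-- L2: finite-index subgroup pair has the same finrank. -/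
lemma finrank_eq_of_finite_quotient {B : Type*} [AddCommGroup B] [AddGroup.FG B]
    {P Q : AddSubgroup B} (hPQ : P ≤ Q)
    (hfin : Finite (Q ⧸ P.addSubgroupOf Q)) :
    Module.finrank ℤ P = Module.finrank ℤ Q := by
  have : AddGroup.FG Q := addSubgroup_fg Q
  have hQfin : Module.Finite ℤ Q := Module.Finite.iff_addGroup_fg.mpr ‹_›
  have hrn := Submodule.finrank_quotient_add_finrank
    (AddSubgroup.toIntSubmodule (P.addSubgroupOf Q))
  have hq0 : Module.finrank ℤ
      ((Q : Type _) ⧸ (AddSubgroup.toIntSubmodule (P.addSubgroupOf Q))) = 0 := by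
    have : Finite ((Q : Type _) ⧸ (AddSubgroup.toIntSubmodule (P.addSubgroupOf Q))) := hfin
    exact finrank_eq_zero_of_finite
  have heq : Module.finrank ℤ (P.addSubgroupOf Q) = Module.finrank ℤ P :=
    ((AddSubgroup.addSubgroupOfEquivOfLe hPQ).toIntLinearEquiv).finrank_eq
  rw [hq0, zero_add] at hrn
  rw [← heq]
  exact hrn

lemma two_mem_nzd : (2 : ℤ) ∈ nonZeroDivisors ℤ := by
  simp [mem_nonZeroDivisors_iff_ne_zero]

/-- L3: main counting lemma. -/
lemma index_two_range {B : Type*} [AddCommGroup B] [AddGroup.FG B] :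
    (two B).range.index = 2 ^ Module.finrank ℤ B * Nat.card (two B).ker := by
  have hMF : Module.Finite ℤ B := Module.Finite.iff_addGroup_fg.mpr ‹_›
  set T : Submodule ℤ B := Submodule.torsion ℤ B with hTdef
  set TA : AddSubgroup B := T.toAddSubgroup with hTA
  have hmemTA : ∀ b : B, b ∈ TA ↔ ∃ k : ℤ, k ≠ 0 ∧ k • b = 0 := by
    intro b
    constructor
    · rintro ⟨⟨k, hk⟩, h⟩
      exact ⟨k, nonZeroDivisors.ne_zero hk, h⟩
    · rintro ⟨k, hk, h⟩
      exact ⟨⟨k, mem_nonZeroDivisors_iff_ne_zero.mpr hk⟩, h⟩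
  have hTFG : Module.Finite ℤ T := Module.Finite.iff_fg.mpr ((isNoetherian_def.mp inferInstance) T)
  have hTfin : Finite T := Module.finite_of_fg_torsion _ (Submodule.torsion_isTorsion)
  have hTAfin : Finite TA := hTfin
  set F := B ⧸ T with hF
  have hFfree : Module.Free ℤ F := Module.free_of_finite_type_torsion_free'
  have hfr : Module.finrank ℤ F = Module.finrank ℤ B := by
    have h := Submodule.finrank_quotient_add_finrank T
    have h0 : Module.finrank ℤ T = 0 := finrank_eq_zero_of_finite
    rw [h0, add_zero] at h
    exact h
  set K : AddSubgroup B := (two B).range with hK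
  -- Step ii : (K ⊔ TA).index = 2 ^ finrank B
  have step2 : (K ⊔ TA).index = 2 ^ Module.finrank ℤ B := by
    set ψ : B →+ (F ⧸ (two F).range) :=
      (QuotientAddGroup.mk' (two F).range).comp (T.mkQ).toAddMonoidHom with hψ
    have hsurj : Function.Surjective ψ :=
      (QuotientAddGroup.mk'_surjective _).comp (Submodule.mkQ_surjective T)
    have hker : ψ.ker = K ⊔ TA := by
      ext a
      rw [AddMonoidHom.mem_ker, hψ]
      simp only [AddMonoidHom.coe_comp, Function.comp_apply, LinearMap.toAddMonoidHom_coe,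
        QuotientAddGroup.mk'_apply]
      rw [QuotientAddGroup.eq_zero_iff]
      constructor
      · intro h
        obtain ⟨y, hy⟩ := (mem_two_range _).mp h
        obtain ⟨b, rfl⟩ := Submodule.mkQ_surjective T y
        have : T.mkQ (a - (b + b)) = 0 := by
          rw [map_sub, map_add, hy, sub_eq_zero.mpr rfl]
        have hmem : a - (b + b) ∈ T := by
          rwa [Submodule.mkQ_apply, Submodule.Quotient.mk_eq_zero] at this
        refine AddSubgroup.mem_sup.mpr ⟨b + b, (mem_two_range _).mpr ⟨b, rfl⟩,
          a - (b + b), hmem, by abel⟩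
      · intro h
        obtain ⟨y, hy, z, hz, rfl⟩ := AddSubgroup.mem_sup.mp h
        obtain ⟨c, rfl⟩ := (mem_two_range _).mp hy
        rw [map_add]
        have hz0 : T.mkQ z = 0 := by
          rw [Submodule.mkQ_apply, Submodule.Quotient.mk_eq_zero]
          exact hz
        rw [hz0, add_zero, map_add]
        exact (mem_two_range _).mpr ⟨T.mkQ c, rfl⟩
    have := AddSubgroup.index_ker ψ
    rw [hker] at this
    rw [this, AddMonoidHom.range_eq_top.mpr hsurj]
    rw [Nat.card_congr AddSubgroup.topEquiv.toEquiv]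
    rw [← AddSubgroup.index_eq_card, index_two_range_of_free, hfr]
  -- Step iii : K.relIndex (K ⊔ TA) = Nat.card (two B).ker
  have step3 : K.relIndex (K ⊔ TA) = Nat.card (two B).ker := by
    rw [AddSubgroup.relIndex_sup_left, ← AddSubgroup.inf_relIndex_right]
    have hsub : (K ⊓ TA).addSubgroupOf TA = (two (TA : Type _)).range := by
      ext x
      constructor
      · intro hx
        have hx' : (x : B) ∈ K ⊓ TA := hx
        obtain ⟨a, ha⟩ := (mem_two_range _).mp hx'.1
        have haT : a ∈ TA := by
          obtain ⟨k, hk, hk0⟩ := (hmemTA _).mp x.2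
          refine (hmemTA a).mpr ⟨2 * k, by omega, ?_⟩
          have h2 : (2 * k) • a = k • (a + a) := by
            rw [mul_comm, mul_smul, two_zsmul]
          rw [h2, ha]
          exact hk0
        rw [mem_two_range]
        refine ⟨⟨a, haT⟩, Subtype.ext ?_⟩
        push_cast
        exact ha
      · intro hx
        obtain ⟨y, hy⟩ := (mem_two_range _).mp hx
        show (x : B) ∈ K ⊓ TA
        have : (y : B) + (y : B) = (x : B) := by
          rw [← hy]; push_cast; rfl
        exact ⟨(mem_two_range _).mpr ⟨y.1, this⟩, x.2⟩
    rw [AddSubgroup.relIndex, hsub, index_range_eq_card_ker_of_finite]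
    apply Nat.card_congr
    refine ⟨fun x => ⟨x.1.1, ?_⟩, fun y => ⟨⟨y.1, ?_⟩, ?_⟩, fun x => by ext; rfl, fun y => rfl⟩
    · rw [mem_two_ker]
      have := (mem_two_ker x.1).mp x.2
      exact_mod_cast congrArg Subtype.val this
    · refine (hmemTA _).mpr ⟨2, by omega, ?_⟩
      rw [two_smul]
      exact (mem_two_ker _).mp y.2
    · rw [mem_two_ker]
      apply Subtype.ext
      push_cast
      exact (mem_two_ker _).mp y.2
  have hle : K ≤ K ⊔ TA := le_sup_left
  have := AddSubgroup.relIndex_mul_index hle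
  rw [step2, step3] at this
  rw [← this]; ring

/-- Key chain lemma. -/
lemma key_chain {A : Type*} [AddCommGroup A] [AddGroup.FG A] (f g : A →+ A)
    (h2 : ∀ a ∈ f.ker, g a = a + a) (hr : g.range ≤ f.ker) :
    (f.ker ⊔ g.ker).index * g.range.relIndex f.ker
      = 2 ^ Module.finrank ℤ f.ker * Nat.card (two (f.ker : Type _)).ker := by
  classical
  set K := f.ker with hK
  set twoK : AddSubgroup A := K.map (two A) with htwoK
  have hmap : K.map g = twoK := by
    ext b
    simp only [AddSubgroup.mem_map]
    constructor
    · rintro ⟨a, ha, rfl⟩; exact ⟨a, ha, by rw [two_apply, h2 a ha]⟩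
    · rintro ⟨a, ha, rfl⟩; exact ⟨a, ha, by rw [two_apply, h2 a ha]⟩
  have htwoK_le : twoK ≤ g.range := by
    rw [← hmap]; rintro b ⟨a, _, rfl⟩; exact ⟨a, rfl⟩
  -- step: twoK.relIndex g.range = (K ⊔ g.ker).index
  have hx : twoK.relIndex g.range = (K ⊔ g.ker).index := by
    have h1 : twoK.relIndex g.range = Nat.card (g.range.map (QuotientAddGroup.mk' twoK)) := by
      have h0 := AddSubgroup.relIndex_ker (QuotientAddGroup.mk' twoK) (K := g.range)
      rwa [QuotientAddGroup.ker_mk'] at h0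
    set φ : A →+ A ⧸ twoK := (QuotientAddGroup.mk' twoK).comp g with hφ
    have hrange : φ.range = g.range.map (QuotientAddGroup.mk' twoK) := AddMonoidHom.range_comp _ _
    have hkerφ : φ.ker = K ⊔ g.ker := by
      ext a
      rw [AddMonoidHom.mem_ker, hφ]
      simp only [AddMonoidHom.coe_comp, Function.comp_apply, QuotientAddGroup.mk'_apply]
      rw [QuotientAddGroup.eq_zero_iff, ← hmap]
      constructor
      · rintro ⟨b, hb, hba⟩
        have : a - b ∈ g.ker := by
          rw [AddMonoidHom.mem_ker, map_sub, hba, sub_self]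
        exact AddSubgroup.mem_sup.mpr ⟨b, hb, a - b, this, by abel⟩
      · intro ha
        obtain ⟨y, hy, z, hz, rfl⟩ := AddSubgroup.mem_sup.mp ha
        have hz0 : g z = 0 := hz
        exact ⟨y, hy, by rw [map_add, hz0, add_zero]⟩
    have := AddSubgroup.index_ker φ
    rw [hkerφ, hrange] at this
    rw [h1, ← this]
  -- step: twoK.relIndex K = 2 ^ finrank * card
  have hcount : twoK.relIndex K = 2 ^ Module.finrank ℤ K * Nat.card (two (K : Type _)).ker := by
    have hsub : twoK.addSubgroupOf K = (two (K : Type _)).range := by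
      ext x
      rw [AddSubgroup.mem_addSubgroupOf, mem_two_range, htwoK]
      simp only [AddSubgroup.mem_map]
      constructor
      · rintro ⟨a, ha, hax⟩
        refine ⟨⟨a, ha⟩, Subtype.ext ?_⟩
        push_cast
        rw [← two_apply, hax]
      · rintro ⟨y, hy⟩
        refine ⟨y.1, y.2, ?_⟩
        rw [two_apply, ← hy]
        push_cast
        rfl
    have : AddGroup.FG (K : Type _) := addSubgroup_fg K
    rw [AddSubgroup.relIndex, hsub, index_two_range]
  -- chain
  have hchain := AddSubgroup.relIndex_mul_relIndex twoK g.range K htwoK_le hr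
  rw [hx] at hchain
  rw [hchain]
  exact hcount

lemma tau_eq {G : Type*} [Group G] [Fintype G] (hG : Nat.card G = 2) {σ : G} (hσ : σ ≠ 1) (τ : G) : τ = 1 ∨ τ = σ := by
  classical
  by_contra h
  push_neg at h
  obtain ⟨h1, h2⟩ := h
  have hs1 : (1 : G) ≠ σ := Ne.symm hσ
  have hcard : ({1, σ, τ} : Finset G).card = 3 := by
    rw [Finset.card_insert_of_notMem (by simp [hs1, Ne.symm h1]),
      Finset.card_insert_of_notMem (by simp [Ne.symm h2]), Finset.card_singleton]
  have hle : ({1, σ, τ} : Finset G).card ≤ Fintype.card G := Finset.card_le_univ _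
  rw [hcard, ← Nat.card_eq_fintype_card, hG] at hle
  omega

lemma sigma_sq {G : Type*} [Group G] [Fintype G] (hG : Nat.card G = 2) {σ : G} (hσ : σ ≠ 1) : σ * σ = 1 := by
  rcases tau_eq hG hσ (σ * σ) with h | h
  · exact h
  · exact absurd (mul_right_cancel (h.trans (one_mul σ).symm)) hσ

variable {A}

lemma normMap_apply {G : Type*} [Group G] [Fintype G] {A : Type*} [AddCommGroup A]
    [DistribMulAction G A] (hG : Nat.card G = 2) {σ : G} (hσ : σ ≠ 1) (a : A) :
    normMap G A a = a + σ • a := by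
  classical
  have huniv : (Finset.univ : Finset G) = {1, σ} := by
    symm
    apply Finset.eq_of_subset_of_card_le (Finset.subset_univ _)
    rw [Finset.card_insert_of_notMem (by simp [Ne.symm hσ]), Finset.card_singleton,
      Finset.card_univ, ← Nat.card_eq_fintype_card, hG]
  rw [normMap, AddMonoidHom.finset_sum_apply, huniv,
    Finset.sum_insert (by simp [Ne.symm hσ]), Finset.sum_singleton]
  simp [DistribMulAction.toAddMonoidHom]


/-- bridge: finrank of AddSubgroup vs Submodule with same members -/
lemma finrank_congr_mem {M : Type*} [AddCommGroup M] {P : AddSubgroup M} {Q : Submodule ℤ M}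
    (h : ∀ x, x ∈ P ↔ x ∈ Q) : Module.finrank ℤ P = Module.finrank ℤ Q :=
  (AddEquiv.toIntLinearEquiv
    { toFun := fun x => (⟨x.1, (h _).mp x.2⟩ : Q)
      invFun := fun y => (⟨y.1, (h _).mpr y.2⟩ : P)
      left_inv := fun x => rfl
      right_inv := fun y => rfl
      map_add' := fun x y => rfl }).finrank_eq


end HerbrandAux

/-- For `G = {1, σ}` of order 2 and `A` a finitely generated `G`-module,
`#H¹(G,A) = 2^{r(A) - 2r₊(A)} · (A^G : N A)`. -/
theorem h1_card_eq_two_zpow_rank_sub_two_mul_rank_plus_mul_index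
    (hG : Nat.card G = 2) (σ : G) (hσ : σ ≠ 1) [AddGroup.FG A] :
    (H1card G A σ : ℚ) =
      (2 : ℚ) ^ ((Module.finrank ℤ A : ℤ) - 2 * (Module.finrank ℤ (fixedSub G A) : ℤ)) *
        (H0card G A : ℚ) := by
  classical
  have hMF : Module.Finite ℤ A := Module.Finite.iff_addGroup_fg.mpr ‹_›
  set N := normMap G A with hNdef
  set D := oneSubMap G A σ with hDdef
  have hσσ : σ * σ = 1 := sigma_sq hG hσ
  have hNa : ∀ a : A, N a = a + σ • a := normMap_apply hG hσ
  have hDa : ∀ a : A, D a = a - σ • a := fun a => rfl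
  set KN := N.ker with hKN
  set KD := D.ker with hKD
  -- basic inclusions and formulas
  have h2N : ∀ a ∈ KN, D a = a + a := by
    intro a ha
    have ha' : a + σ • a = 0 := by rw [← hNa]; exact ha
    have : σ • a = -a := by linear_combination (norm := abel_nf) ha'
    rw [hDa, this]; abel
  have h2D : ∀ a ∈ KD, N a = a + a := by
    intro a ha
    have ha' : a - σ • a = 0 := by rw [← hDa]; exact ha
    have : σ • a = a := by linear_combination (norm := abel_nf) -ha'
    rw [hNa, this]
  have hRD_le : D.range ≤ KN := by
    rintro b ⟨a, rfl⟩
    show N (D a) = 0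
    rw [hDa, hNa, smul_sub, smul_smul, hσσ, one_smul]
    abel
  have hRN_le : N.range ≤ KD := by
    rintro b ⟨a, rfl⟩
    show D (N a) = 0
    rw [hNa, hDa, smul_add, smul_smul, hσσ, one_smul]
    abel
  have hfix : fixedSub G A = KD := by
    ext a
    constructor
    · intro h
      show D a = 0
      rw [hDa, h σ, sub_self]
    · intro h τ
      have hs : σ • a = a := by
        have : a - σ • a = 0 := by rw [← hDa]; exact h
        linear_combination (norm := abel_nf) -this
      rcases tau_eq hG hσ τ with rfl | rfl
      · exact one_smul _ _
      · exact hs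
  -- c's
  have hKNfg : AddGroup.FG (KN : Type _) := addSubgroup_fg _
  have hKDfg : AddGroup.FG (KD : Type _) := addSubgroup_fg _
  set cN := Nat.card ((two (KN : Type _)).ker) with hcN
  set cD := Nat.card ((two (KD : Type _)).ker) with hcD
  have hmemswap : ∀ a : A, a + a = 0 → (a ∈ KN ↔ a ∈ KD) := by
    intro a haa
    have hsa : σ • (a + a) = 0 := by rw [haa, smul_zero]
    have h1 : N a - D a = 0 := by
      rw [hNa, hDa, ← hsa, smul_add]; abel
    constructor
    · intro h; have h' : N a = 0 := h
      show D a = 0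
      linear_combination (norm := abel_nf) h' - h1
    · intro h; have h' : D a = 0 := h
      show N a = 0
      linear_combination (norm := abel_nf) h' + h1
  have hcc : cN = cD := by
    apply Nat.card_congr
    refine ⟨fun x => ⟨⟨x.1.1, ?_⟩, ?_⟩, fun y => ⟨⟨y.1.1, ?_⟩, ?_⟩, fun x => by ext; rfl,
      fun y => by ext; rfl⟩
    · have hx2 : (x.1.1 : A) + x.1.1 = 0 := by
        exact_mod_cast congrArg Subtype.val ((mem_two_ker x.1).mp x.2)
      exact (hmemswap x.1.1 hx2).mp x.1.2
    · rw [mem_two_ker]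
      have hx2 : (x.1.1 : A) + x.1.1 = 0 := by
        exact_mod_cast congrArg Subtype.val ((mem_two_ker x.1).mp x.2)
      exact Subtype.ext hx2
    · have hy2 : (y.1.1 : A) + y.1.1 = 0 := by
        exact_mod_cast congrArg Subtype.val ((mem_two_ker y.1).mp y.2)
      exact (hmemswap y.1.1 hy2).mpr y.1.2
    · rw [mem_two_ker]
      have hy2 : (y.1.1 : A) + y.1.1 = 0 := by
        exact_mod_cast congrArg Subtype.val ((mem_two_ker y.1).mp y.2)
      exact Subtype.ext hy2
  have hcfin : Finite ((two (KN : Type _)).ker) := by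
    have := addSubgroup_fg (two (KN : Type _)).ker
    apply AddCommGroup.finite_of_fg_torsion
    intro y
    rw [isOfFinAddOrder_iff_nsmul_eq_zero]
    refine ⟨2, by omega, ?_⟩
    apply Subtype.ext
    have h := (mem_two_ker y.1).mp y.2
    show ((2 • y.1 : _)) = 0
    rw [two_nsmul]
    exact_mod_cast congrArg Subtype.val h
  have hc0 : cN ≠ 0 := by
    rw [hcN]
    exact Nat.card_ne_zero.mpr ⟨⟨0, AddSubgroup.zero_mem _⟩, hcfin⟩
  have hcD0 : cD ≠ 0 := hcc ▸ hc0
  have e1 := key_chain N D h2N hRD_le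
  have e2 := key_chain D N h2D hRN_le
  rw [sup_comm D.ker N.ker] at e2
  have hH1 : H1card G A σ = D.range.relIndex KN := rfl
  have hH0 : H0card G A = N.range.relIndex KD := by
    have h0 : H0card G A
        = Nat.card (fixedSub G A ⧸ ((normMap G A).range.addSubgroupOf (fixedSub G A))) := rfl
    rw [h0, hfix]
    rfl
  rw [← hH1] at e1
  rw [← hH0] at e2
  set x := (KN ⊔ KD).index with hxdef
  set ra := Module.finrank ℤ KN with hra
  set rb := Module.finrank ℤ KD with hrb
  -- nonvanishing
  have hrhs2 : 2 ^ rb * cD ≠ 0 := Nat.mul_ne_zero (pow_ne_zero _ two_ne_zero) hcD0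
  have hx0 : x ≠ 0 := by
    intro h
    rw [h, zero_mul] at e2
    exact hrhs2 e2.symm
  have hH00 : H0card G A ≠ 0 := by
    intro h
    rw [h, mul_zero] at e2
    exact hrhs2 e2.symm
  -- rank facts
  have hfixrank : Module.finrank ℤ (fixedSub G A) = rb := by rw [hfix]
  have hQne : Nat.card (KD ⧸ N.range.addSubgroupOf KD) ≠ 0 := by
    have h1 : N.range.relIndex KD ≠ 0 := by rw [← hH0]; exact hH00
    exact h1
  have hfinquot : Finite (KD ⧸ N.range.addSubgroupOf KD) := (Nat.card_ne_zero.mp hQne).2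
  have hrkRN : Module.finrank ℤ N.range = rb :=
    finrank_eq_of_finite_quotient hRN_le hfinquot
  have hab : ra + rb = Module.finrank ℤ A := by
    have hrn := Submodule.finrank_quotient_add_finrank (LinearMap.ker N.toIntLinearMap)
    have hquot : Module.finrank ℤ (A ⧸ LinearMap.ker N.toIntLinearMap)
        = Module.finrank ℤ (LinearMap.range N.toIntLinearMap) :=
      (LinearMap.quotKerEquivRange N.toIntLinearMap).finrank_eq
    have hker : Module.finrank ℤ KN = Module.finrank ℤ (LinearMap.ker N.toIntLinearMap) :=
      finrank_congr_mem (fun x => Iff.rfl)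
    have hrange : Module.finrank ℤ (N.range : AddSubgroup A)
        = Module.finrank ℤ (LinearMap.range N.toIntLinearMap) :=
      finrank_congr_mem (fun x => Iff.rfl)
    rw [hquot, ← hrange, hrkRN, ← hker] at hrn
    omega
  -- final arithmetic over ℚ
  have q1 : (x : ℚ) * (H1card G A σ : ℚ) = 2 ^ ra * (cN : ℚ) := by exact_mod_cast congrArg Nat.cast e1
  have q2 : (x : ℚ) * (H0card G A : ℚ) = 2 ^ rb * (cD : ℚ) := by exact_mod_cast congrArg Nat.cast e2
  have qcc : (cN : ℚ) = (cD : ℚ) := by exact_mod_cast hcc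
  rw [hfixrank]
  have hexp : (Module.finrank ℤ A : ℤ) - 2 * (rb : ℤ) = (ra : ℤ) - (rb : ℤ) := by omega
  rw [hexp, zpow_sub₀ (two_ne_zero), zpow_natCast, zpow_natCast]
  have h2b : ((2 : ℚ) ^ rb) ≠ 0 := pow_ne_zero _ two_ne_zero
  rw [div_mul_eq_mul_div, eq_div_iff h2b]
  have hxq : (x : ℚ) ≠ 0 := by exact_mod_cast hx0
  apply mul_right_cancel₀ hxq
  linear_combination (2:ℚ) ^ rb * q1 - (2:ℚ) ^ ra * q2 + (2:ℚ) ^ ra * (2:ℚ) ^ rb * qcc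
end

section
/- Let G = {1, σ} be a group of order 2 and A a G-module that is a finitely generated abelian group with rank(A^G) = 0 and A^G[2] = {0}. Then A = A⁺ + A⁻ and #H¹(G, A) = 2^{rank(A)}. -/
variable (G : Type*) [Group G] [Fintype G] (A : Type*) [AddCommGroup A] [DistribMulAction G A]

/-- The subgroup `A⁻ = {a | σ • a = -a}`. -/
def minusSub (σ : G) : AddSubgroup A where
  carrier := {a | σ • a = -a}
  zero_mem' := by simp
  add_mem' := fun {a b} ha hb => by
    simp only [Set.mem_setOf_eq] at *; rw [smul_add, ha, hb, neg_add]
  neg_mem' := fun {a} ha => by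
    simp only [Set.mem_setOf_eq] at *; rw [smul_neg, ha, neg_neg]

/-! ### Auxiliary material -/

/-- The doubling homomorphism `b ↦ b + b`. -/
def dblHom (B : Type*) [AddCommGroup B] : B →+ B where
  toFun := fun b => b + b
  map_zero' := by simp
  map_add' := fun a b => add_add_add_comm a b a b

@[simp] lemma dblHom_apply {B : Type*} [AddCommGroup B] (b : B) : dblHom B b = b + b := rfl

lemma card_aux (n : ℕ) (T : Type) [AddCommGroup T] [Finite T]
    (hT2 : ∀ t : T, t + t = 0 → t = 0) :
    Nat.card (((Fin n →₀ ℤ) × T) ⧸ (dblHom ((Fin n →₀ ℤ) × T)).range) = 2 ^ n ∧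
      Module.finrank ℤ ((Fin n →₀ ℤ) × T) = n := by
  have hTsurj : ∀ t : T, ∃ s : T, s + s = t := by
    have hinj : Function.Injective (fun t : T => t + t) := by
      intro s t hst
      have : (s - t) + (s - t) = 0 := by
        have : s + s = t + t := hst
        rw [sub_add_sub_comm, this, sub_self]
      have := hT2 _ this
      rwa [sub_eq_zero] at this
    intro t
    exact (Finite.injective_iff_surjective.mp hinj) t
  constructor
  · -- cardinality computation via the mod-2 map
    let ψ : ((Fin n →₀ ℤ) × T) →+ (Fin n → ZMod 2) :=
      { toFun := fun c i => ((c.1 i : ℤ) : ZMod 2)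
        map_zero' := by funext i; simp
        map_add' := fun a b => by
          funext i; simp [Prod.fst_add, Finsupp.add_apply] }
    have hψsurj : Function.Surjective ψ := by
      intro g
      refine ⟨(Finsupp.equivFunOnFinite.symm fun i => ((g i).val : ℤ), 0), ?_⟩
      funext i
      simp [ψ, ZMod.natCast_rightInverse (g i)]
    have hψker : ψ.ker = (dblHom _).range := by
      ext c
      constructor
      · intro hc
        rw [AddMonoidHom.mem_ker] at hc
        have hdvd : ∀ i, (2 : ℤ) ∣ c.1 i := by
          intro i
          have : ((c.1 i : ℤ) : ZMod 2) = 0 := congrFun hc i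
          exact (ZMod.intCast_zmod_eq_zero_iff_dvd _ 2).mp this
        obtain ⟨s, hs⟩ := hTsurj c.2
        refine ⟨(Finsupp.equivFunOnFinite.symm fun i => c.1 i / 2, s), ?_⟩
        rw [dblHom_apply]
        ext i
        · obtain ⟨k, hk⟩ := hdvd i
          have hdiv : c.1 i / 2 = k := by
            rw [hk]; exact Int.mul_ediv_cancel_left _ two_ne_zero
          simp only [Prod.fst_add, Finsupp.add_apply,
            Finsupp.coe_equivFunOnFinite_symm]
          rw [hdiv, hk, two_mul]
        · simpa using hs
      · rintro ⟨y, rfl⟩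
        rw [AddMonoidHom.mem_ker]
        funext i
        have h20 : (2 : ZMod 2) = 0 := rfl
        simp only [dblHom_apply, map_add, Pi.add_apply]
        rw [← two_mul]
        show (2 : ZMod 2) * _ = 0
        rw [h20, zero_mul]
    have e2 : (((Fin n →₀ ℤ) × T) ⧸ (dblHom _).range) ≃+ (Fin n → ZMod 2) := by
      rw [← hψker]
      exact QuotientAddGroup.quotientKerEquivOfSurjective ψ hψsurj
    rw [Nat.card_congr e2.toEquiv, Nat.card_pi]
    simp [Nat.card_zmod]
  · -- rank computation
    have hN : LinearMap.ker (LinearMap.fst ℤ (Fin n →₀ ℤ) T) ≤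
        Submodule.torsion ℤ ((Fin n →₀ ℤ) × T) := by
      rintro ⟨x, t⟩ hx
      rw [LinearMap.mem_ker] at hx
      have hx0 : x = 0 := hx
      have hcard : (0 : ℕ) < Nat.card T := Nat.card_pos
      refine ⟨⟨(Nat.card T : ℤ), mem_nonZeroDivisors_of_ne_zero (by exact_mod_cast hcard.ne')⟩, ?_⟩
      ext
      · simp [hx0]
      · show (Nat.card T : ℤ) • t = 0
        rw [natCast_zsmul]
        exact card_nsmul_eq_zero'
    have h1 := rank_quotient_eq_of_le_torsion hN
    have e3 : ((((Fin n →₀ ℤ) × T)) ⧸ LinearMap.ker (LinearMap.fst ℤ (Fin n →₀ ℤ) T))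
        ≃ₗ[ℤ] (Fin n →₀ ℤ) :=
      LinearMap.quotKerEquivOfSurjective _ Prod.fst_surjective
    have h2 : Module.rank ℤ ((Fin n →₀ ℤ) × T) = Module.rank ℤ (Fin n →₀ ℤ) := by
      rw [← h1, e3.rank_eq]
    rw [Module.finrank, h2, ← Module.finrank]
    rw [Module.finrank_finsupp_self, Fintype.card_fin]

lemma card_quot_dbl (B : Type*) [AddCommGroup B] [AddGroup.FG B]
    (h2 : ∀ b : B, b + b = 0 → b = 0) :
    Nat.card (B ⧸ (dblHom B).range) = 2 ^ Module.finrank ℤ B := by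
  obtain ⟨n, ι, fι, p, hp, e, ⟨f⟩⟩ := AddCommGroup.equiv_free_prod_directSum_zmod B
  haveI : DecidableEq ι := Classical.decEq ι
  haveI : ∀ i, NeZero (p i ^ e i) := fun i => ⟨pow_ne_zero _ (hp i).pos.ne'⟩
  haveI : ∀ i, Fintype (ZMod (p i ^ e i)) := fun i => ZMod.fintype _
  haveI : Finite (DirectSum ι fun i => ZMod (p i ^ e i)) := by
    have : Fintype (DirectSum ι fun i => ZMod (p i ^ e i)) := DFinsupp.fintype
    exact Finite.of_fintype _
  have hC2 : ∀ t : (DirectSum ι fun i => ZMod (p i ^ e i)), t + t = 0 → t = 0 := by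
    intro t ht
    have h0 : ((0, t) : (Fin n →₀ ℤ) × (DirectSum ι fun i => ZMod (p i ^ e i))) + (0, t) = 0 := by
      rw [Prod.mk_add_mk, ht]
      simp
    have h3 : f.symm (0, t) = 0 := h2 _ (by rw [← map_add, h0, map_zero])
    have h4 : ((0, t) : (Fin n →₀ ℤ) × (DirectSum ι fun i => ZMod (p i ^ e i))) = 0 := by
      have := congrArg f h3
      simpa using this
    simpa using congrArg Prod.snd h4
  obtain ⟨hcard, hrank⟩ := card_aux n _ hC2
  have hmap : ((dblHom B).range).map f.toAddMonoidHom = (dblHom _).range := by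
    ext c
    simp only [AddSubgroup.mem_map, AddMonoidHom.mem_range]
    constructor
    · rintro ⟨b, ⟨a, rfl⟩, rfl⟩
      exact ⟨f a, by simp⟩
    · rintro ⟨y, hy⟩
      exact ⟨f.symm c, ⟨f.symm y, by rw [dblHom_apply, ← map_add, ← dblHom_apply, hy]⟩, by simp⟩
  have e1 : (B ⧸ (dblHom B).range) ≃+
      (((Fin n →₀ ℤ) × (DirectSum ι fun i => ZMod (p i ^ e i))) ⧸ (dblHom _).range) :=
    QuotientAddGroup.congr _ _ f hmap
  have hfin : Module.finrank ℤ B = n := by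
    rw [LinearEquiv.finrank_eq f.toIntLinearEquiv, hrank]
  rw [Nat.card_congr e1.toEquiv, hcard, hfin]

/-- For `G = {1, σ}` of order 2 and `A` a finitely generated `G`-module with
`rank A^G = 0` and `A^G[2] = 0`, one has `A = A⁺ + A⁻` and `#H¹(G,A) = 2^{rank A}`. -/
theorem sup_plus_minus_eq_top_and_h1_card_eq_two_pow_rank
    (hG : Nat.card G = 2) (σ : G) (hσ : σ ≠ 1) [AddGroup.FG A]
    (hrk : Module.finrank ℤ (fixedSub G A) = 0)
    (htor : ∀ a ∈ fixedSub G A, 2 • a = 0 → a = 0) :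
    fixedSub G A ⊔ minusSub G A σ = ⊤ ∧
      H1card G A σ = 2 ^ (Module.finrank ℤ A) := by
  classical
  have hcard2 : Fintype.card G = 2 := by rw [← Nat.card_eq_fintype_card]; exact hG
  have hσσ : σ * σ = 1 := by
    have := pow_card_eq_one (G := G) (x := σ)
    rwa [hcard2, pow_two] at this
  have htau : ∀ τ : G, τ = 1 ∨ τ = σ := by
    intro τ
    by_contra h
    push_neg at h
    have h1σ : (1 : G) ≠ σ := Ne.symm hσ
    have h1τ : (1 : G) ≠ τ := fun hh => h.1 hh.symm
    have hστ : σ ≠ τ := fun hh => h.2 hh.symm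
    have h3 : ({1, σ, τ} : Finset G).card = 3 := by
      rw [Finset.card_insert_of_notMem (by simp [h1σ, h1τ]),
        Finset.card_insert_of_notMem (by simp [hστ]), Finset.card_singleton]
    have hle := Finset.card_le_univ ({1, σ, τ} : Finset G)
    rw [h3, hcard2] at hle
    omega
  have huniv : (Finset.univ : Finset G) = {1, σ} := by
    symm
    apply Finset.eq_univ_of_card
    rw [Finset.card_insert_of_notMem (by simp [Ne.symm hσ]), Finset.card_singleton, hcard2]
  have hσσa : ∀ a : A, σ • σ • a = a := by
    intro a; rw [← mul_smul, hσσ, one_smul]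
  have hnorm : ∀ a : A, normMap G A a = a + σ • a := by
    intro a
    show (∑ τ : G, DistribMulAction.toAddMonoidHom A τ) a = a + σ • a
    rw [huniv, Finset.sum_insert (by simpa using Ne.symm hσ), Finset.sum_singleton]
    simp
  have hfix : ∀ a : A, a ∈ fixedSub G A ↔ σ • a = a := by
    intro a
    constructor
    · exact fun h => h σ
    · intro h τ
      rcases htau τ with rfl | rfl
      · exact one_smul _ _
      · exact h
  -- finiteness instances
  haveI : Module.Finite ℤ A := Module.Finite.iff_addGroup_fg.mpr ‹_›
  haveI : IsNoetherian ℤ A := isNoetherian_of_isNoetherianRing_of_finite ℤ A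
  haveI hMFp : Module.Finite ℤ (AddSubgroup.toIntSubmodule (fixedSub G A)) :=
    Module.Finite.iff_fg.mpr (IsNoetherian.noetherian _)
  haveI hMFp' : Module.Finite ℤ (fixedSub G A) := hMFp
  haveI : AddGroup.FG (fixedSub G A) := Module.Finite.iff_addGroup_fg.mp hMFp'
  have htorsion : AddMonoid.IsTorsion (fixedSub G A) := by
    intro x
    rw [isOfFinAddOrder_iff_zsmul_eq_zero]
    obtain ⟨m, hm, hmx⟩ := Module.finrank_eq_zero_iff.mp hrk x
    exact ⟨m, hm, hmx⟩
  haveI : Finite (fixedSub G A) := AddCommGroup.finite_of_fg_torsion _ htorsion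
  -- doubling is surjective on the fixed subgroup
  have hdblsurj : ∀ b ∈ fixedSub G A, ∃ c ∈ fixedSub G A, c + c = b := by
    have hinj : Function.Injective (fun x : fixedSub G A => x + x) := by
      intro x y hxy
      have hsub : (x - y) + (x - y) = 0 := by
        have hxy' : x + x = y + y := hxy
        rw [sub_add_sub_comm, hxy', sub_self]
      have hval : ((x : A) - y) + ((x : A) - y) = 0 := by
        exact_mod_cast congrArg Subtype.val hsub
      have := htor ((x : A) - y) (sub_mem x.2 y.2) (by rw [two_nsmul]; exact hval)
      exact Subtype.ext (sub_eq_zero.mp this)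
    intro b hb
    obtain ⟨c, hc⟩ := (Finite.injective_iff_surjective.mp hinj) ⟨b, hb⟩
    exact ⟨c, c.2, congrArg Subtype.val hc⟩
  -- decomposition of A
  have hdecomp : ∀ a : A, ∃ c ∈ fixedSub G A, a - c ∈ minusSub G A σ := by
    intro a
    have hb : a + σ • a ∈ fixedSub G A := by
      rw [hfix, smul_add, hσσa]
      abel
    obtain ⟨c, hcmem, hcc⟩ := hdblsurj _ hb
    refine ⟨c, hcmem, ?_⟩
    show σ • (a - c) = -(a - c)
    have hσc : σ • c = c := hcmem σ
    have hσa : σ • a = c + c - a := by rw [hcc]; abel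
    rw [smul_sub, hσc, hσa]
    abel
  have hsup : fixedSub G A ⊔ minusSub G A σ = ⊤ := by
    rw [AddSubgroup.eq_top_iff']
    intro a
    obtain ⟨c, hc, hm⟩ := hdecomp a
    exact AddSubgroup.mem_sup.mpr ⟨c, hc, a - c, hm, by abel⟩
  refine ⟨hsup, ?_⟩
  -- the kernel of the norm map is `A⁻`
  have hker : (normMap G A).ker = minusSub G A σ := by
    ext a
    rw [AddMonoidHom.mem_ker, hnorm]
    constructor
    · intro h
      show σ • a = -a
      rw [add_comm] at h
      exact eq_neg_of_add_eq_zero_left h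
    · intro h
      have h' : σ • a = -a := h
      rw [h', add_neg_cancel]
  -- `A⁻` is 2-torsion-free
  have hm2 : ∀ b : (minusSub G A σ), b + b = 0 → b = 0 := by
    rintro ⟨b, hb⟩ h
    have hval : b + b = 0 := by
      have := congrArg Subtype.val h
      simpa using this
    have hbfix : b ∈ fixedSub G A := by
      rw [hfix]
      have hb' : σ • b = -b := hb
      rw [hb']
      exact neg_eq_of_add_eq_zero_left hval
    have := htor b hbfix (by rw [two_nsmul]; exact hval)
    exact Subtype.ext this
  haveI hMFm : Module.Finite ℤ (AddSubgroup.toIntSubmodule (minusSub G A σ)) :=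
    Module.Finite.iff_fg.mpr (IsNoetherian.noetherian _)
  haveI hMFm' : Module.Finite ℤ (minusSub G A σ) := hMFm
  haveI : AddGroup.FG (minusSub G A σ) := Module.Finite.iff_addGroup_fg.mp hMFm'
  -- the image of `1 - σ` inside `A⁻` is doubling
  have hsubOf : (oneSubMap G A σ).range.addSubgroupOf (minusSub G A σ)
      = (dblHom (minusSub G A σ)).range := by
    ext x
    rw [AddSubgroup.mem_addSubgroupOf, AddMonoidHom.mem_range, AddMonoidHom.mem_range]
    constructor
    · rintro ⟨a, ha⟩
      have ha' : a - σ • a = ↑x := ha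
      obtain ⟨c, hc, hm⟩ := hdecomp a
      refine ⟨⟨a - c, hm⟩, ?_⟩
      apply Subtype.ext
      show (a - c) + (a - c) = ↑x
      have h1 : σ • (a - c) = -(a - c) := hm
      have h2 : σ • c = c := hc σ
      have h3 : σ • a = c + -(a - c) := by
        have h4 : σ • a = σ • c + σ • (a - c) := by
          rw [← smul_add]
          congr 1
          abel
        rw [h4, h2, h1]
      rw [← ha', h3]
      abel
    · rintro ⟨y, rfl⟩
      refine ⟨(y : A), ?_⟩
      have h1 : σ • (y : A) = -(y : A) := y.2
      show (y : A) - σ • (y : A) = ((dblHom _ y : minusSub G A σ) : A)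
      rw [h1, sub_neg_eq_add]
      rfl
  -- compute `H¹` as `A⁻ / 2A⁻`
  have hH1 : H1card G A σ = Nat.card ((minusSub G A σ) ⧸ (dblHom (minusSub G A σ)).range) := by
    unfold H1card
    rw [hker, hsubOf]
  rw [hH1, card_quot_dbl _ hm2]
  -- rank of `A⁻` equals rank of `A`
  have hcompl : IsCompl (AddSubgroup.toIntSubmodule (fixedSub G A))
      (AddSubgroup.toIntSubmodule (minusSub G A σ)) := by
    constructor
    · rw [Submodule.disjoint_def]
      intro x hxp hxm
      have hxp' : x ∈ fixedSub G A := hxp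
      have hxm' : x ∈ minusSub G A σ := hxm
      have h1 : σ • x = x := hxp' σ
      have h2 : σ • x = -x := hxm'
      have h3 : x = -x := h1.symm.trans h2
      refine htor x hxp' ?_
      rw [two_nsmul]
      nth_rewrite 2 [h3]
      rw [add_neg_cancel]
    · rw [codisjoint_iff, eq_top_iff]
      rintro x -
      obtain ⟨c, hc, hm⟩ := hdecomp x
      exact Submodule.mem_sup.mpr ⟨c, hc, x - c, hm, by abel⟩
  have e4 := Submodule.prodEquivOfIsCompl _ _ hcompl
  haveI : Finite (AddSubgroup.toIntSubmodule (fixedSub G A)) := ‹Finite (fixedSub G A)›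
  have hN2 : LinearMap.ker (LinearMap.snd ℤ (AddSubgroup.toIntSubmodule (fixedSub G A))
        (AddSubgroup.toIntSubmodule (minusSub G A σ))) ≤
      Submodule.torsion ℤ ((AddSubgroup.toIntSubmodule (fixedSub G A))
        × (AddSubgroup.toIntSubmodule (minusSub G A σ))) := by
    rintro ⟨u, v⟩ hv
    rw [LinearMap.mem_ker] at hv
    have hv0 : v = 0 := hv
    have hcpos : (0 : ℕ) < Nat.card (AddSubgroup.toIntSubmodule (fixedSub G A)) := Nat.card_pos
    refine ⟨⟨(Nat.card (AddSubgroup.toIntSubmodule (fixedSub G A)) : ℤ),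
      mem_nonZeroDivisors_of_ne_zero (by exact_mod_cast hcpos.ne')⟩, ?_⟩
    have hu : (Nat.card (AddSubgroup.toIntSubmodule (fixedSub G A)) : ℤ) • u = 0 := by
      rw [natCast_zsmul]
      exact card_nsmul_eq_zero'
    simp [Submonoid.smul_def, Prod.smul_mk, hu, hv0]
  have e5 : (((AddSubgroup.toIntSubmodule (fixedSub G A))
        × (AddSubgroup.toIntSubmodule (minusSub G A σ))) ⧸
        LinearMap.ker (LinearMap.snd ℤ (AddSubgroup.toIntSubmodule (fixedSub G A))
        (AddSubgroup.toIntSubmodule (minusSub G A σ))))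
      ≃ₗ[ℤ] (AddSubgroup.toIntSubmodule (minusSub G A σ)) :=
    LinearMap.quotKerEquivOfSurjective _ Prod.snd_surjective
  have hr : Module.rank ℤ A = Module.rank ℤ (AddSubgroup.toIntSubmodule (minusSub G A σ)) := by
    rw [← e4.rank_eq, ← rank_quotient_eq_of_le_torsion hN2, e5.rank_eq]
  have hfr : Module.finrank ℤ A = Module.finrank ℤ (minusSub G A σ) := by
    show (Module.rank ℤ A).toNat = _
    rw [hr]
    rfl
  rw [hfr]
end

section
/- Let G be a finite cyclic group with generator σ of order n, and A a G-module that is a finitely generated abelian group. Then #H¹(G, A) = (ₙA : (1-σ)(ₙA)) / (NA : n·A^G), where ₙA = {a ∈ A : Na = 0} with N = Σ_{τ∈G} τ, and NA = {Na : a ∈ A}. -/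
variable (G : Type*) [Group G] [Fintype G] (A : Type*) [AddCommGroup A] [DistribMulAction G A]

section aux

variable {G A}

lemma normMap_apply_s6 (a : A) : normMap G A a = ∑ τ : G, τ • a := by
  simp [normMap]

lemma oneSubMap_apply (σ : G) (a : A) : oneSubMap G A σ a = a - σ • a := rfl

lemma normMap_smul (τ : G) (a : A) : normMap G A (τ • a) = normMap G A a := by
  simp only [normMap_apply_s6]
  exact Fintype.sum_equiv (Equiv.mulRight τ) _ _ (fun x => by simp [mul_smul])

lemma smul_normMap (τ : G) (a : A) : τ • normMap G A a = normMap G A a := by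
  rw [normMap_apply_s6, Finset.smul_sum]
  exact Fintype.sum_equiv (Equiv.mulLeft τ) _ _ (fun x => by simp [mul_smul])

lemma normMap_mem_fixed (a : A) : normMap G A a ∈ fixedSub G A := fun τ => smul_normMap τ a

lemma normMap_of_fixed {a : A} (ha : a ∈ fixedSub G A) :
    normMap G A a = Fintype.card G • a := by
  rw [normMap_apply_s6]
  rw [Finset.sum_congr rfl (fun τ _ => ha τ), Finset.sum_const, Finset.card_univ]

lemma oneSubMap_ker (σ : G) (hgen : ∀ τ : G, τ ∈ Subgroup.zpowers σ) :
    (oneSubMap G A σ).ker = fixedSub G A := by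
  ext a
  simp only [AddMonoidHom.mem_ker, oneSubMap_apply, sub_eq_zero]
  constructor
  · intro h τ
    have hσ : σ ∈ MulAction.stabilizer G a := h.symm
    exact Subgroup.zpowers_le.mpr hσ (hgen τ)
  · intro h
    exact (h σ).symm

lemma normMap_comp_oneSub (σ : G) (a : A) : normMap G A (oneSubMap G A σ a) = 0 := by
  rw [oneSubMap_apply, map_sub, normMap_smul, sub_self]

end aux

/-- For `G` cyclic of order `n` with generator `σ` and `A` a finitely
generated `G`-module, `#H¹(G,A) = (ₙA : (1-σ)(ₙA)) / (NA : n·A^G)`, where `ₙA = ker N`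
and `NA = im N`. -/
theorem h1_card_eq_index_div_index
    (σ : G) (hgen : ∀ τ : G, τ ∈ Subgroup.zpowers σ) (n : ℕ) (hn : orderOf σ = n)
    [AddGroup.FG A] :
    (H1card G A σ : ℚ) =
      (Nat.card ((normMap G A).ker ⧸
          ((AddSubgroup.map (oneSubMap G A σ) (normMap G A).ker).addSubgroupOf
            (normMap G A).ker)) : ℚ) /
      (Nat.card ((normMap G A).range ⧸
          ((AddSubgroup.map (n • AddMonoidHom.id A) (fixedSub G A)).addSubgroupOf
            (normMap G A).range)) : ℚ) := by
  have hcard : Fintype.card G = n := by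
    rw [← hn, orderOf_eq_card_of_forall_mem_zpowers hgen, Nat.card_eq_fintype_card]
  have hnpos : 0 < n := hn ▸ orderOf_pos σ
  set N := normMap G A with hN
  set T := oneSubMap G A σ with hT
  set K := N.ker with hK
  set B := T.range with hB
  set C := AddSubgroup.map T K with hC
  set R := N.range with hR
  set D := AddSubgroup.map (n • AddMonoidHom.id A) (fixedSub G A) with hD
  -- fixed points are n-smul map of fixed points: norm on fixed is n-smul
  have hNfix : ∀ a ∈ fixedSub G A, N a = n • a := fun a ha => by
    rw [hN, normMap_of_fixed ha, hcard]
  -- inclusions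
  have hCB : C ≤ B := by
    rintro _ ⟨a, _, rfl⟩; exact ⟨a, rfl⟩
  have hBK : B ≤ K := by
    rintro _ ⟨a, rfl⟩
    exact normMap_comp_oneSub σ a
  have hDR : D ≤ R := by
    rintro _ ⟨a, ha, rfl⟩
    exact ⟨a, by rw [hNfix a ha]; simp⟩
  -- the common kernel S
  set S := K ⊔ fixedSub G A with hS
  -- φ : A → B ⧸ C'
  set φ : A →+ B ⧸ C.addSubgroupOf B :=
    (QuotientAddGroup.mk' (C.addSubgroupOf B)).comp T.rangeRestrict with hφ
  have hφsurj : Function.Surjective φ :=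
    (QuotientAddGroup.mk'_surjective _).comp T.rangeRestrict_surjective
  have hφker : φ.ker = S := by
    ext a
    rw [AddMonoidHom.mem_ker, hφ, AddMonoidHom.comp_apply,
      QuotientAddGroup.mk'_apply, QuotientAddGroup.eq_zero_iff,
      AddSubgroup.mem_addSubgroupOf, AddMonoidHom.coe_rangeRestrict]
    constructor
    · rintro ⟨k, hk, hka⟩
      have hfix : a - k ∈ fixedSub G A := by
        rw [← oneSubMap_ker σ hgen, AddMonoidHom.mem_ker]
        rw [map_sub, hka, sub_self]
      refine (AddSubgroup.mem_sup).mpr ⟨k, hk, a - k, hfix, by abel⟩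
    · intro ha
      obtain ⟨k, hk, f, hf, rfl⟩ := (AddSubgroup.mem_sup).mp ha
      have : T f = 0 := by
        rw [← AddMonoidHom.mem_ker, oneSubMap_ker σ hgen]; exact hf
      rw [map_add, this, add_zero]
      exact ⟨k, hk, rfl⟩
  -- ψ : A → R ⧸ D'
  set ψ : A →+ R ⧸ D.addSubgroupOf R :=
    (QuotientAddGroup.mk' (D.addSubgroupOf R)).comp N.rangeRestrict with hψ
  have hψsurj : Function.Surjective ψ :=
    (QuotientAddGroup.mk'_surjective _).comp N.rangeRestrict_surjective
  have hψker : ψ.ker = S := by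
    ext a
    rw [AddMonoidHom.mem_ker, hψ, AddMonoidHom.comp_apply,
      QuotientAddGroup.mk'_apply, QuotientAddGroup.eq_zero_iff,
      AddSubgroup.mem_addSubgroupOf, AddMonoidHom.coe_rangeRestrict]
    constructor
    · rintro ⟨b, hb, hba⟩
      have hba' : N a = N b := by
        rw [← hba, hNfix b hb]; simp
      have : a - b ∈ K := by
        rw [hK, AddMonoidHom.mem_ker, map_sub, hba', sub_self]
      refine (AddSubgroup.mem_sup).mpr ⟨a - b, this, b, hb, by abel⟩
    · intro ha
      obtain ⟨k, hk, f, hf, rfl⟩ := (AddSubgroup.mem_sup).mp ha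
      refine ⟨f, hf, ?_⟩
      rw [map_add, show N k = 0 from hk, zero_add, hNfix f hf]
      simp
  -- A ⧸ S is finite
  have hSfin : Finite (A ⧸ S) := by
    apply AddCommGroup.finite_of_fg_torsion
    intro x
    rw [isOfFinAddOrder_iff_nsmul_eq_zero]
    refine ⟨n, hnpos, ?_⟩
    induction x using QuotientAddGroup.induction_on with
    | H a =>
      rw [← QuotientAddGroup.mk_nsmul, QuotientAddGroup.eq_zero_iff]
      have h1 : n • a - N a ∈ K := by
        rw [hK, AddMonoidHom.mem_ker, map_sub, map_nsmul,
          hNfix (N a) (normMap_mem_fixed a), sub_self]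
      have h2 : N a ∈ fixedSub G A := normMap_mem_fixed a
      exact (AddSubgroup.mem_sup).mpr ⟨n • a - N a, h1, N a, h2, by abel⟩
  -- transfer cardinalities
  have e1 : Nat.card (B ⧸ C.addSubgroupOf B) = Nat.card (A ⧸ S) := by
    rw [← hφker]
    exact (Nat.card_congr (QuotientAddGroup.quotientKerEquivOfSurjective φ hφsurj).toEquiv).symm
  have e2 : Nat.card (R ⧸ D.addSubgroupOf R) = Nat.card (A ⧸ S) := by
    rw [← hψker]
    exact (Nat.card_congr (QuotientAddGroup.quotientKerEquivOfSurjective ψ hψsurj).toEquiv).symm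
  -- indices
  have hrel : C.relIndex B * B.relIndex K = C.relIndex K :=
    AddSubgroup.relIndex_mul_relIndex C B K hCB hBK
  have hCB' : C.relIndex B = Nat.card (R ⧸ D.addSubgroupOf R) := by
    rw [e2, ← e1]; rfl
  have hpos : (0 : ℚ) < (Nat.card (R ⧸ D.addSubgroupOf R) : ℚ) := by
    have hfin : Finite (A ⧸ ψ.ker) := by rw [hψker]; exact hSfin
    have : Finite (R ⧸ D.addSubgroupOf R) :=
      Finite.of_equiv _ (QuotientAddGroup.quotientKerEquivOfSurjective ψ hψsurj).toEquiv
    exact_mod_cast Nat.card_pos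
  have hgoalnum : Nat.card (K ⧸ C.addSubgroupOf K) =
      Nat.card (R ⧸ D.addSubgroupOf R) * H1card G A σ := by
    have h1 : H1card G A σ = B.relIndex K := rfl
    have h2 : Nat.card (K ⧸ C.addSubgroupOf K) = C.relIndex K := rfl
    rw [h1, h2, ← hrel, hCB']
  rw [hgoalnum]
  push_cast
  rw [mul_comm, mul_div_assoc, div_self (ne_of_gt hpos), mul_one]
end
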